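/- Let X be a Banach space and {T_σ} a switched evolution family that is globally uniformly exponentially stable: ‖T_σ(t)‖ ≤ K e^{−μt} uniformly in σ. Define V(x) = sup_σ ∫₀^∞ ‖T_σ(t)x‖² dt. Then V is convex, positively homogeneous of degree 2, positive definite, and continuous on X; consequently √V is a norm on X. -/

import Mathlib

open MeasureTheory Real Filter Set Topology

section aux

variable {α : Type*} [MeasurableSpace α] {μ : Measure α}

lemma key_l2 {f : α → ℝ} (hf : MemLp f 2 μ) :
    ∫ a, f a ^ 2 ∂μ = ‖hf.toLp f‖ ^ 2 := by
  have h1 : (inner ℝ (hf.toLp f) (hf.toLp f) : ℝ) = ∫ a, (hf.toLp f : α → ℝ) a * (hf.toLp f : α → ℝ) a ∂μ := by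
    rw [L2.inner_def]
    simp [RCLike.inner_apply, starRingEnd_apply, star_trivial, pow_two]
  have h2 : ∫ a, (hf.toLp f : α → ℝ) a * (hf.toLp f : α → ℝ) a ∂μ = ∫ a, f a * f a ∂μ :=
    integral_congr_ae ((hf.coeFn_toLp).mono fun a ha => by dsimp only; rw [ha])
  have h3 : (inner ℝ (hf.toLp f) (hf.toLp f) : ℝ) = ‖hf.toLp f‖ ^ 2 := real_inner_self_eq_norm_sq _
  simp_rw [pow_two]
  rw [← h2, ← h1, h3]
  rw [pow_two]

lemma minkowski_aux {f g h : α → ℝ} (hf : MemLp f 2 μ) (hg : MemLp g 2 μ)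
    (hh : AEStronglyMeasurable h μ) (h0 : ∀ a, 0 ≤ h a)
    (hle : ∀ a, h a ≤ f a + g a) (hf0 : ∀ a, 0 ≤ f a) (hg0 : ∀ a, 0 ≤ g a) :
    Real.sqrt (∫ a, h a ^ 2 ∂μ) ≤ Real.sqrt (∫ a, f a ^ 2 ∂μ) + Real.sqrt (∫ a, g a ^ 2 ∂μ) := by
  have hfg : MemLp (f + g) 2 μ := hf.add hg
  have hh2 : MemLp h 2 μ := by
    refine hfg.of_le hh (ae_of_all _ fun a => ?_)
    rw [Real.norm_eq_abs, abs_of_nonneg (h0 a), Real.norm_eq_abs,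
      abs_of_nonneg (by have := add_nonneg (hf0 a) (hg0 a); simpa using this)]
    simpa using hle a
  have hint_h : Integrable (fun a => h a ^ 2) μ :=
    (memLp_two_iff_integrable_sq hh).mp hh2
  have hint_fg : Integrable (fun a => (f a + g a) ^ 2) μ := by
    have := (memLp_two_iff_integrable_sq hfg.aestronglyMeasurable).mp hfg
    simpa using this
  have hmono : ∫ a, h a ^ 2 ∂μ ≤ ∫ a, (f a + g a) ^ 2 ∂μ :=
    integral_mono hint_h hint_fg fun a => pow_le_pow_left₀ (h0 a) (hle a) 2
  have hfgval : ∫ a, (f a + g a) ^ 2 ∂μ = ‖hfg.toLp (f + g)‖ ^ 2 := by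
    have := key_l2 hfg
    simpa using this
  have hsplit : hfg.toLp (f + g) = hf.toLp f + hg.toLp g := hf.toLp_add hg
  calc Real.sqrt (∫ a, h a ^ 2 ∂μ) ≤ Real.sqrt (∫ a, (f a + g a) ^ 2 ∂μ) :=
        Real.sqrt_le_sqrt hmono
    _ = ‖hfg.toLp (f + g)‖ := by rw [hfgval, Real.sqrt_sq (norm_nonneg _)]
    _ ≤ ‖hf.toLp f‖ + ‖hg.toLp g‖ := by rw [hsplit]; exact norm_add_le _ _
    _ = Real.sqrt (∫ a, f a ^ 2 ∂μ) + Real.sqrt (∫ a, g a ^ 2 ∂μ) := by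
        rw [key_l2 hf, key_l2 hg, Real.sqrt_sq (norm_nonneg _), Real.sqrt_sq (norm_nonneg _)]

end aux

/-- A strongly continuous semigroup of bounded linear operators on `X`. -/
structure C0Semigroup (X : Type*) [NormedAddCommGroup X] [NormedSpace ℝ X] where
  T : ℝ → X →L[ℝ] X
  map_zero : T 0 = ContinuousLinearMap.id ℝ X
  map_add : ∀ s t : ℝ, 0 ≤ s → 0 ≤ t → T (s + t) = (T s).comp (T t)
  strong_cont : ∀ x : X, ContinuousOn (fun t => T t x) (Set.Ici 0)

/-- A switched evolution family generated by strongly continuous semigroups indexed by the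
set of modes `Q`, with `Sig` the (abstract) class of piecewise constant switching signals and
`T σ t` the evolution operator along the signal `σ` at time `t`. -/
structure SwitchedSystem (Q X : Type*) [NormedAddCommGroup X] [NormedSpace ℝ X] where
  mode : Q → C0Semigroup X
  Sig : Type
  T : Sig → ℝ → X →L[ℝ] X
  T_zero : ∀ σ, T σ 0 = ContinuousLinearMap.id ℝ X
  strong_cont : ∀ σ x, ContinuousOn (fun t => T σ t x) (Set.Ici 0)
  /-- constant switching signals -/
  const : Q → Sig
  T_const : ∀ j t, T (const j) t = (mode j).T t
  /-- concatenation property: `T σ (t+s) = T σₛ t ∘ T σ s` for some shifted signal `σₛ` -/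
  shift : ∀ (σ : Sig) (s : ℝ), 0 ≤ s → ∃ σ' : Sig, ∀ t, 0 ≤ t →
    T σ (t + s) = (T σ' t).comp (T σ s)
  /-- the class of signals is closed under prepending a mode for a given duration -/
  prepend : ∀ (j : Q) (σ : Sig) (s : ℝ), 0 ≤ s → ∃ σ' : Sig,
    (∀ t, 0 ≤ t → t ≤ s → T σ' t = (mode j).T t) ∧
    (∀ t, 0 ≤ t → T σ' (t + s) = (T σ t).comp ((mode j).T s))

/-- For a globally uniformly exponentially stable switched system, the Lyapunov function
`V(x) = sup_σ ∫₀^∞ ‖T_σ(t)x‖² dt` is nonnegative, convex, positively homogeneous of degree 2,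
positive definite and continuous; consequently `√V` is a norm on `X`. -/
theorem stmt6 {X : Type*} [NormedAddCommGroup X] [NormedSpace ℝ X] [CompleteSpace X]
    {Q : Type*} [Nonempty Q] (S : SwitchedSystem Q X)
    (K μ : ℝ) (hK : 1 ≤ K) (hμ : 0 < μ)
    (hdecay : ∀ (σ : S.Sig) (t : ℝ), 0 ≤ t → ‖S.T σ t‖ ≤ K * Real.exp (-μ * t))
    (V : X → ℝ)
    (hVdef : ∀ x, V x = ⨆ σ : S.Sig, ∫ t in Set.Ioi (0:ℝ), ‖S.T σ t x‖ ^ 2) :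
    (∀ x, 0 ≤ V x) ∧
    ConvexOn ℝ Set.univ V ∧
    (∀ (a : ℝ) (x : X), 0 ≤ a → V (a • x) = a ^ 2 * V x) ∧
    (∀ x, V x = 0 ↔ x = 0) ∧
    Continuous V ∧
    (∀ x y : X, Real.sqrt (V (x + y)) ≤ Real.sqrt (V x) + Real.sqrt (V y)) ∧
    (∀ (a : ℝ) (x : X), Real.sqrt (V (a • x)) = |a| * Real.sqrt (V x)) := by
  have hSig : Nonempty S.Sig := ⟨S.const (Classical.arbitrary Q)⟩
  set ν : Measure ℝ := volume.restrict (Set.Ioi (0:ℝ)) with hν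
  set I : S.Sig → X → ℝ := fun σ x => ∫ t in Set.Ioi (0:ℝ), ‖S.T σ t x‖ ^ 2 with hI
  -- measurability
  have hcont : ∀ (σ : S.Sig) (x : X), ContinuousOn (fun t => ‖S.T σ t x‖) (Set.Ioi 0) :=
    fun σ x => ((S.strong_cont σ x).mono Set.Ioi_subset_Ici_self).norm
  have hmeas : ∀ (σ : S.Sig) (x : X),
      AEStronglyMeasurable (fun t => ‖S.T σ t x‖) ν :=
    fun σ x => (hcont σ x).aestronglyMeasurable measurableSet_Ioi
  have hmeas2 : ∀ (σ : S.Sig) (x : X),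
      AEStronglyMeasurable (fun t => ‖S.T σ t x‖ ^ 2) ν :=
    fun σ x => (hmeas σ x).pow 2
  -- pointwise exponential bound
  have hb : ∀ (σ : S.Sig) (x : X) (t : ℝ), 0 ≤ t →
      ‖S.T σ t x‖ ^ 2 ≤ K ^ 2 * ‖x‖ ^ 2 * Real.exp (-(2 * μ) * t) := by
    intro σ x t ht
    have h1 : ‖S.T σ t x‖ ≤ (K * Real.exp (-μ * t)) * ‖x‖ :=
      le_trans ((S.T σ t).le_opNorm x)
        (mul_le_mul_of_nonneg_right (hdecay σ t ht) (norm_nonneg x))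
    have h2 : ‖S.T σ t x‖ ^ 2 ≤ ((K * Real.exp (-μ * t)) * ‖x‖) ^ 2 :=
      pow_le_pow_left₀ (norm_nonneg _) h1 2
    have h3 : Real.exp (-μ * t) ^ 2 = Real.exp (-(2 * μ) * t) := by
      rw [← Real.exp_nat_mul]; ring_nf
    calc ‖S.T σ t x‖ ^ 2 ≤ ((K * Real.exp (-μ * t)) * ‖x‖) ^ 2 := h2
      _ = K ^ 2 * ‖x‖ ^ 2 * Real.exp (-μ * t) ^ 2 := by ring
      _ = K ^ 2 * ‖x‖ ^ 2 * Real.exp (-(2 * μ) * t) := by rw [h3]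
  -- integrability
  have hdom : ∀ (x : X), IntegrableOn
      (fun t => K ^ 2 * ‖x‖ ^ 2 * Real.exp (-(2 * μ) * t)) (Set.Ioi 0) := by
    intro x
    exact (exp_neg_integrableOn_Ioi 0 (by positivity)).const_mul _
  have hint : ∀ (σ : S.Sig) (x : X),
      IntegrableOn (fun t => ‖S.T σ t x‖ ^ 2) (Set.Ioi 0) := by
    intro σ x
    refine Integrable.mono (hdom x) (hmeas2 σ x) ?_
    refine (ae_restrict_iff' measurableSet_Ioi).mpr (ae_of_all _ fun t ht => ?_)
    have h0 : (0:ℝ) ≤ t := le_of_lt ht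
    rw [Real.norm_eq_abs, abs_of_nonneg (by positivity), Real.norm_eq_abs,
      abs_of_nonneg (by positivity)]
    exact hb σ x t h0
  have hmem : ∀ (σ : S.Sig) (x : X), MemLp (fun t => ‖S.T σ t x‖) 2 ν :=
    fun σ x => (memLp_two_iff_integrable_sq (hmeas σ x)).mpr (hint σ x)
  -- uniform bound
  set C : ℝ := K ^ 2 * ∫ t in Set.Ioi (0:ℝ), Real.exp (-(2 * μ) * t) with hC
  have hC0 : 0 ≤ C := by
    refine mul_nonneg (by positivity) (integral_nonneg fun t => (Real.exp_pos _).le)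
  have hIle : ∀ (σ : S.Sig) (x : X), I σ x ≤ C * ‖x‖ ^ 2 := by
    intro σ x
    have h1 : I σ x ≤ ∫ t in Set.Ioi (0:ℝ), K ^ 2 * ‖x‖ ^ 2 * Real.exp (-(2 * μ) * t) := by
      refine setIntegral_mono_on (hint σ x) (hdom x) measurableSet_Ioi fun t ht => ?_
      exact hb σ x t (le_of_lt ht)
    calc I σ x ≤ ∫ t in Set.Ioi (0:ℝ), K ^ 2 * ‖x‖ ^ 2 * Real.exp (-(2 * μ) * t) := h1
      _ = K ^ 2 * ‖x‖ ^ 2 * ∫ t in Set.Ioi (0:ℝ), Real.exp (-(2 * μ) * t) :=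
          integral_const_mul _ _
      _ = C * ‖x‖ ^ 2 := by rw [hC]; ring
  have hInonneg : ∀ (σ : S.Sig) (x : X), 0 ≤ I σ x :=
    fun σ x => integral_nonneg fun t => by positivity
  have hbdd : ∀ x : X, BddAbove (Set.range fun σ => I σ x) := by
    intro x
    refine ⟨C * ‖x‖ ^ 2, ?_⟩
    rintro r ⟨σ, rfl⟩
    exact hIle σ x
  have hVI : ∀ x, V x = ⨆ σ, I σ x := hVdef
  have hIleV : ∀ (σ : S.Sig) (x : X), I σ x ≤ V x := by
    intro σ x; rw [hVI]; exact le_ciSup (hbdd x) σ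
  have hVnonneg : ∀ x, 0 ≤ V x := fun x =>
    le_trans (hInonneg (Classical.arbitrary _) x) (hIleV _ x)
  have hVle : ∀ x, V x ≤ C * ‖x‖ ^ 2 := by
    intro x; rw [hVI]; exact ciSup_le fun σ => hIle σ x
  -- homogeneity (all scalars)
  have hIsmul : ∀ (σ : S.Sig) (a : ℝ) (x : X), I σ (a • x) = a ^ 2 * I σ x := by
    intro σ a x
    have h1 : ∀ t : ℝ, ‖S.T σ t (a • x)‖ ^ 2 = a ^ 2 * ‖S.T σ t x‖ ^ 2 := by
      intro t
      rw [(S.T σ t).map_smul, norm_smul, Real.norm_eq_abs, mul_pow, sq_abs]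
    simp only [hI]
    calc (∫ t in Set.Ioi (0:ℝ), ‖S.T σ t (a • x)‖ ^ 2)
        = ∫ t in Set.Ioi (0:ℝ), a ^ 2 * ‖S.T σ t x‖ ^ 2 := by
          exact integral_congr_ae (ae_of_all _ fun t => h1 t)
      _ = a ^ 2 * ∫ t in Set.Ioi (0:ℝ), ‖S.T σ t x‖ ^ 2 := integral_const_mul _ _
  have hVsmul : ∀ (a : ℝ) (x : X), V (a • x) = a ^ 2 * V x := by
    intro a x
    rw [hVI, hVI]
    calc (⨆ σ, I σ (a • x)) = ⨆ σ, a ^ 2 * I σ x := iSup_congr fun σ => hIsmul σ a x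
      _ = a ^ 2 * ⨆ σ, I σ x := (Real.mul_iSup_of_nonneg (sq_nonneg a) _).symm
  have hV0 : V 0 = 0 := by
    have := hVsmul 0 0
    simpa using this
  -- sqrt triangle inequality
  have hsqrtI : ∀ (σ : S.Sig) (x y : X),
      Real.sqrt (I σ (x + y)) ≤ Real.sqrt (I σ x) + Real.sqrt (I σ y) := by
    intro σ x y
    have := minkowski_aux (μ := ν) (f := fun t => ‖S.T σ t x‖) (g := fun t => ‖S.T σ t y‖)
      (h := fun t => ‖S.T σ t (x + y)‖) (hmem σ x) (hmem σ y) (hmeas σ (x + y))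
      (fun t => norm_nonneg _)
      (fun t => by (try dsimp only); rw [(S.T σ t).map_add]; exact norm_add_le _ _)
      (fun t => norm_nonneg _) (fun t => norm_nonneg _)
    exact this
  have htri : ∀ x y : X, Real.sqrt (V (x + y)) ≤ Real.sqrt (V x) + Real.sqrt (V y) := by
    intro x y
    have hsum0 : 0 ≤ Real.sqrt (V x) + Real.sqrt (V y) :=
      add_nonneg (Real.sqrt_nonneg _) (Real.sqrt_nonneg _)
    have h1 : V (x + y) ≤ (Real.sqrt (V x) + Real.sqrt (V y)) ^ 2 := by
      rw [hVI]
      refine ciSup_le fun σ => ?_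
      calc I σ (x + y) = Real.sqrt (I σ (x + y)) ^ 2 := (Real.sq_sqrt (hInonneg σ _)).symm
        _ ≤ (Real.sqrt (I σ x) + Real.sqrt (I σ y)) ^ 2 :=
            pow_le_pow_left₀ (Real.sqrt_nonneg _) (hsqrtI σ x y) 2
        _ ≤ (Real.sqrt (V x) + Real.sqrt (V y)) ^ 2 := by
            refine pow_le_pow_left₀
              (add_nonneg (Real.sqrt_nonneg _) (Real.sqrt_nonneg _)) ?_ 2
            exact add_le_add (Real.sqrt_le_sqrt (hIleV σ x)) (Real.sqrt_le_sqrt (hIleV σ y))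
    calc Real.sqrt (V (x + y)) ≤ Real.sqrt ((Real.sqrt (V x) + Real.sqrt (V y)) ^ 2) :=
          Real.sqrt_le_sqrt h1
      _ = Real.sqrt (V x) + Real.sqrt (V y) := Real.sqrt_sq hsum0
  -- convexity
  have hconv : ConvexOn ℝ Set.univ V := by
    refine ⟨convex_univ, fun x _ y _ a b ha hb hab => ?_⟩
    rw [smul_eq_mul, smul_eq_mul]
    rw [hVI]
    refine ciSup_le fun σ => ?_
    have hpt : ∀ t : ℝ, ‖S.T σ t (a • x + b • y)‖ ^ 2
        ≤ a * ‖S.T σ t x‖ ^ 2 + b * ‖S.T σ t y‖ ^ 2 := by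
      intro t
      have h1 : ‖S.T σ t (a • x + b • y)‖ ≤ a * ‖S.T σ t x‖ + b * ‖S.T σ t y‖ := by
        rw [(S.T σ t).map_add, (S.T σ t).map_smul, (S.T σ t).map_smul]
        refine le_trans (norm_add_le _ _) ?_
        rw [norm_smul, norm_smul, Real.norm_eq_abs, Real.norm_eq_abs,
          abs_of_nonneg ha, abs_of_nonneg hb]
      have h2 : (a * ‖S.T σ t x‖ + b * ‖S.T σ t y‖) ^ 2
          ≤ a * ‖S.T σ t x‖ ^ 2 + b * ‖S.T σ t y‖ ^ 2 := by
        have := (Even.convexOn_pow (even_two : Even 2)).2 (Set.mem_univ (‖S.T σ t x‖))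
          (Set.mem_univ (‖S.T σ t y‖)) ha hb hab
        simpa [smul_eq_mul] using this
      calc ‖S.T σ t (a • x + b • y)‖ ^ 2 ≤ (a * ‖S.T σ t x‖ + b * ‖S.T σ t y‖) ^ 2 :=
            pow_le_pow_left₀ (norm_nonneg _) h1 2
        _ ≤ a * ‖S.T σ t x‖ ^ 2 + b * ‖S.T σ t y‖ ^ 2 := h2
    have hrint : IntegrableOn
        (fun t => a * ‖S.T σ t x‖ ^ 2 + b * ‖S.T σ t y‖ ^ 2) (Set.Ioi 0) :=
      ((hint σ x).const_mul a).add ((hint σ y).const_mul b)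
    calc I σ (a • x + b • y)
        ≤ ∫ t in Set.Ioi (0:ℝ), (a * ‖S.T σ t x‖ ^ 2 + b * ‖S.T σ t y‖ ^ 2) :=
          integral_mono (hint σ _) hrint fun t => hpt t
      _ = a * I σ x + b * I σ y := by
          rw [integral_add ((hint σ x).const_mul a) ((hint σ y).const_mul b),
            integral_const_mul, integral_const_mul]
      _ ≤ a * V x + b * V y :=
          add_le_add (mul_le_mul_of_nonneg_left (hIleV σ x) ha)
            (mul_le_mul_of_nonneg_left (hIleV σ y) hb)
  -- positive definiteness
  have hdef : ∀ x : X, V x = 0 ↔ x = 0 := by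
    intro x
    constructor
    · intro hx
      by_contra hx0
      have hxpos : 0 < ‖x‖ := norm_pos_iff.mpr hx0
      set σ₀ : S.Sig := S.const (Classical.arbitrary Q) with hσ₀
      have hI0 : I σ₀ x = 0 :=
        le_antisymm (hx ▸ hIleV σ₀ x) (hInonneg σ₀ x)
      have hae : (fun t => ‖S.T σ₀ t x‖ ^ 2) =ᵐ[ν] 0 := by
        refine (integral_eq_zero_iff_of_nonneg (fun t => by positivity) (hint σ₀ x)).mp hI0
      have hae' : ∀ᵐ t ∂(volume : Measure ℝ), t ∈ Set.Ioi (0:ℝ) → ‖S.T σ₀ t x‖ ^ 2 = 0 := by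
        rw [hν] at hae
        exact (ae_restrict_iff' measurableSet_Ioi).mp hae
      -- continuity at 0 gives a small interval where the norm is large
      have htend : Tendsto (fun t => ‖S.T σ₀ t x‖) (nhdsWithin 0 (Set.Ioi 0)) (nhds ‖x‖) := by
        have h1 : ContinuousWithinAt (fun t => S.T σ₀ t x) (Set.Ici 0) 0 :=
          (S.strong_cont σ₀ x) 0 (Set.mem_Ici.mpr le_rfl)
        have h2 : Tendsto (fun t => S.T σ₀ t x) (nhdsWithin 0 (Set.Ioi 0)) (nhds (S.T σ₀ 0 x)) :=
          h1.tendsto.mono_left (nhdsWithin_mono 0 Set.Ioi_subset_Ici_self)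
        have h3 : S.T σ₀ 0 x = x := by rw [S.T_zero]; rfl
        rw [h3] at h2
        exact h2.norm
      have hev : ∀ᶠ t in nhdsWithin 0 (Set.Ioi 0), ‖x‖ / 2 < ‖S.T σ₀ t x‖ :=
        htend.eventually (eventually_gt_nhds (by linarith))
      obtain ⟨u, hu, hsub⟩ := mem_nhdsGT_iff_exists_Ioo_subset.mp hev
      have hu0 : (0:ℝ) < u := hu
      -- the bad set is null but contains Ioo 0 u
      have hnull : (volume : Measure ℝ) {t | ¬ (t ∈ Set.Ioi (0:ℝ) → ‖S.T σ₀ t x‖ ^ 2 = 0)} = 0 :=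
        hae'
      have hcontain : Set.Ioo (0:ℝ) u ⊆
          {t | ¬ (t ∈ Set.Ioi (0:ℝ) → ‖S.T σ₀ t x‖ ^ 2 = 0)} := by
        intro t ht
        have h1 : ‖x‖ / 2 < ‖S.T σ₀ t x‖ := hsub ht
        intro hcon
        have h2 : ‖S.T σ₀ t x‖ ^ 2 = 0 := hcon ht.1
        have h3 : ‖S.T σ₀ t x‖ = 0 := by
          have := sq_eq_zero_iff.mp h2
          exact this
        rw [h3] at h1
        linarith
      have := measure_mono_null hcontain hnull
      rw [Real.volume_Ioo] at this
      simp only [sub_zero] at this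
      exact absurd this (by simp [ENNReal.ofReal_eq_zero]; linarith)
    · intro hx; rw [hx]; exact hV0
  -- continuity
  have hWle : ∀ z : X, Real.sqrt (V z) ≤ Real.sqrt C * ‖z‖ := by
    intro z
    calc Real.sqrt (V z) ≤ Real.sqrt (C * ‖z‖ ^ 2) := Real.sqrt_le_sqrt (hVle z)
      _ = Real.sqrt C * ‖z‖ := by
          rw [Real.sqrt_mul hC0, Real.sqrt_sq (norm_nonneg z)]
  have hlip : ∀ x y : X, |Real.sqrt (V x) - Real.sqrt (V y)| ≤ Real.sqrt C * ‖x - y‖ := by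
    intro x y
    rw [abs_sub_le_iff]
    constructor
    · have h1 : Real.sqrt (V x) ≤ Real.sqrt (V y) + Real.sqrt (V (x - y)) := by
        have := htri y (x - y)
        rwa [add_sub_cancel] at this
      have h2 := hWle (x - y)
      linarith
    · have h1 : Real.sqrt (V y) ≤ Real.sqrt (V x) + Real.sqrt (V (y - x)) := by
        have := htri x (y - x)
        rwa [add_sub_cancel] at this
      have h2 : Real.sqrt (V (y - x)) ≤ Real.sqrt C * ‖x - y‖ := by
        have := hWle (y - x)
        rwa [norm_sub_rev] at this
      linarith
  have hWcont : Continuous fun x => Real.sqrt (V x) := by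
    refine (LipschitzWith.of_dist_le_mul (K := Real.toNNReal (Real.sqrt C))
      (f := fun x => Real.sqrt (V x)) fun x y => ?_).continuous
    rw [Real.dist_eq, dist_eq_norm]
    calc |Real.sqrt (V x) - Real.sqrt (V y)| ≤ Real.sqrt C * ‖x - y‖ := hlip x y
      _ = (Real.toNNReal (Real.sqrt C) : ℝ) * ‖x - y‖ := by
          rw [Real.coe_toNNReal _ (Real.sqrt_nonneg _)]
  have hVcont : Continuous V := by
    have hVeq : V = fun x => (Real.sqrt (V x)) ^ 2 :=
      funext fun x => (Real.sq_sqrt (hVnonneg x)).symm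
    rw [hVeq]
    exact hWcont.pow 2
  refine ⟨hVnonneg, hconv, fun a x _ => hVsmul a x, hdef, hVcont, htri, ?_⟩
  intro a x
  rw [hVsmul a x, Real.sqrt_mul (sq_nonneg a), Real.sqrt_sq_eq_abs]
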